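/- Suppose each of n agents has a matroid rank valuation v_i on subsets of a finite set O of items. Then an allocation A is leximin if and only if A is a maximum Nash welfare (MNW) allocation. -/

import Mathlib

/-- An allocation: bundles are pairwise disjoint. -/
def IsAlloc {O : Type*} [DecidableEq O] {n : ℕ} (A : Fin n → Finset O) : Prop :=
  ∀ i j, i ≠ j → Disjoint (A i) (A j)

/-- The vector of realized valuations, sorted in non-decreasing order. -/
def sVec {O : Type*} {n : ℕ} (v : Fin n → Finset O → ℤ)
    (A : Fin n → Finset O) : Fin n → ℤ :=
  (fun i => v i (A i)) ∘ Tuple.sort (fun i => v i (A i))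

/-- The set of agents with positive realized value. -/
def posAgents {O : Type*} {n : ℕ} (v : Fin n → Finset O → ℤ)
    (A : Fin n → Finset O) : Finset (Fin n) :=
  Finset.univ.filter fun i => 0 < v i (A i)

/-- Maximum Nash welfare allocation: maximizes the number of agents with
positive value, and among those, maximizes the product of positive values. -/
def IsMNW {O : Type*} [DecidableEq O] {n : ℕ} (v : Fin n → Finset O → ℤ)
    (A : Fin n → Finset O) : Prop :=
  IsAlloc A ∧
  (∀ B : Fin n → Finset O, IsAlloc B → (posAgents v B).card ≤ (posAgents v A).card) ∧
  (∀ B : Fin n → Finset O, IsAlloc B → (posAgents v B).card = (posAgents v A).card →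
    ∏ i ∈ posAgents v B, v i (B i) ≤ ∏ i ∈ posAgents v A, v i (A i))

set_option linter.unusedSectionVars false
set_option linter.unusedTactic false
set_option linter.unusedVariables false
set_option maxHeartbeats 1000000

namespace LexMNW



variable {O : Type*} [DecidableEq O] [Fintype O]

section Rank

variable (r : Finset O → ℤ)

def RankAx : Prop :=
  r ∅ = 0 ∧
  (∀ (S : Finset O) (o : O), o ∉ S → r (insert o S) - r S = 0 ∨ r (insert o S) - r S = 1) ∧
  (∀ (S T : Finset O), S ⊆ T → ∀ o ∉ T, r (insert o T) - r T ≤ r (insert o S) - r S)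

variable {r}

lemma RankAx.le_insert (h : RankAx r) (S : Finset O) (o : O) : r S ≤ r (insert o S) := by
  by_cases ho : o ∈ S
  · rw [Finset.insert_eq_self.2 ho]
  · rcases h.2.1 S o ho with h1 | h1 <;> omega

lemma RankAx.insert_le (h : RankAx r) (S : Finset O) (o : O) : r (insert o S) ≤ r S + 1 := by
  by_cases ho : o ∈ S
  · rw [Finset.insert_eq_self.2 ho]; omega
  · rcases h.2.1 S o ho with h1 | h1 <;> omega

lemma RankAx.le_union (h : RankAx r) (S T : Finset O) : r S ≤ r (S ∪ T) := by
  induction T using Finset.induction_on with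
  | empty => simp
  | @insert a T ha ih =>
    rw [Finset.union_insert]
    exact ih.trans (h.le_insert _ a)

lemma RankAx.mono (h : RankAx r) {S T : Finset O} (hST : S ⊆ T) : r S ≤ r T := by
  have := h.le_union S T
  rwa [Finset.union_eq_right.2 hST] at this

lemma RankAx.union_le_card (h : RankAx r) (S T : Finset O) :
    r (S ∪ T) ≤ r S + T.card := by
  induction T using Finset.induction_on with
  | empty => simp
  | @insert a T ha ih =>
    rw [Finset.union_insert]
    have := h.insert_le (S ∪ T) a
    rw [Finset.card_insert_of_notMem ha]
    push_cast
    omega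

lemma RankAx.le_card (h : RankAx r) (S : Finset O) : r S ≤ S.card := by
  have := h.union_le_card ∅ S
  rw [Finset.empty_union, h.1] at this
  omega

lemma RankAx.nonneg (h : RankAx r) (S : Finset O) : 0 ≤ r S := by
  have := h.mono (Finset.empty_subset S)
  rw [h.1] at this; omega

lemma RankAx.spanned_mono (h : RankAx r) {S T : Finset O} (hST : S ⊆ T) {o : O}
    (ho : r (insert o S) = r S) : r (insert o T) = r T := by
  by_cases hoT : o ∈ T
  · rw [Finset.insert_eq_self.2 hoT]
  · have h1 := h.2.2 S T hST o hoT
    have h2 := h.le_insert T o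
    omega

lemma RankAx.union_spanned (h : RankAx r) {S T : Finset O}
    (hT : ∀ o ∈ T, r (insert o S) = r S) : r (S ∪ T) = r S := by
  induction T using Finset.induction_on with
  | empty => simp
  | @insert a T ha ih =>
    have hsub : S ⊆ S ∪ T := Finset.subset_union_left
    have h1 : r (insert a (S ∪ T)) = r (S ∪ T) :=
      h.spanned_mono hsub (hT a (Finset.mem_insert_self a T))
    rw [Finset.union_insert, h1, ih fun o ho => hT o (Finset.mem_insert_of_mem ho)]

/-- Independence. -/
def Indep (r : Finset O → ℤ) (S : Finset O) : Prop := r S = S.card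

lemma RankAx.indep_empty (h : RankAx r) : Indep r ∅ := by simp [Indep, h.1]

lemma RankAx.indep_subset (h : RankAx r) {S T : Finset O} (hT : Indep r T) (hST : S ⊆ T) :
    Indep r S := by
  have h1 : r T ≤ r S + (T \ S).card := by
    have := h.union_le_card S (T \ S)
    rwa [Finset.union_sdiff_of_subset hST] at this
  have h2 : (T \ S).card + S.card = T.card := Finset.card_sdiff_add_card_eq_card hST
  have h3 := h.le_card S
  have h4 := hT
  unfold Indep at *
  push_cast at *
  omega

lemma RankAx.indep_insert (h : RankAx r) {S : Finset O} (hS : Indep r S) {o : O} (ho : o ∉ S)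
    (hr : r (insert o S) = r S + 1) : Indep r (insert o S) := by
  unfold Indep at *
  rw [hr, hS, Finset.card_insert_of_notMem ho]
  push_cast; ring

lemma RankAx.augment (h : RankAx r) {I T : Finset O} (hI : Indep r I)
    (hlt : (I.card : ℤ) < r T) : ∃ y ∈ T, y ∉ I ∧ Indep r (insert y I) := by
  by_contra hcon
  push_neg at hcon
  have hall : ∀ o ∈ T, r (insert o I) = r I := by
    intro o hoT
    by_cases hoI : o ∈ I
    · rw [Finset.insert_eq_self.2 hoI]
    · have hni := hcon o hoT hoI
      have h1 := h.le_insert I o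
      have h2 := h.insert_le I o
      have : r (insert o I) ≠ r I + 1 := by
        intro he
        exact hni (h.indep_insert hI hoI he)
      omega
  have : r (I ∪ T) = r I := h.union_spanned hall
  have h2 : r T ≤ r (I ∪ T) := by
    have := h.le_union T I
    rwa [Finset.union_comm] at this
  rw [hI] at this
  omega

lemma RankAx.exists_clean (h : RankAx r) (S : Finset O) :
    ∃ T ⊆ S, Indep r T ∧ (T.card : ℤ) = r S := by
  have key : ∀ k : ℕ, (k : ℤ) ≤ r S → ∃ T ⊆ S, Indep r T ∧ T.card = k := by
    intro k
    induction k with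
    | zero => intro _; exact ⟨∅, Finset.empty_subset S, h.indep_empty, rfl⟩
    | succ k ih =>
      intro hk
      obtain ⟨T, hTS, hTi, hTc⟩ := ih (by push_cast at hk ⊢; omega)
      obtain ⟨y, hyS, hyT, hyi⟩ := h.augment (T := S) hTi
        (by rw [hTc]; push_cast at hk ⊢; omega)
      exact ⟨insert y T, Finset.insert_subset hyS hTS, hyi,
        by rw [Finset.card_insert_of_notMem hyT, hTc]⟩
  obtain ⟨T, hTS, hTi, hTc⟩ := key (r S).toNat (by rw [Int.toNat_of_nonneg (h.nonneg S)])
  exact ⟨T, hTS, hTi, by rw [hTc, Int.toNat_of_nonneg (h.nonneg S)]⟩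

end Rank

section Alloc

variable {n : ℕ} {v : Fin n → Finset O → ℤ}

def Clean (v : Fin n → Finset O → ℤ) (A : Fin n → Finset O) : Prop := ∀ i, Indep (v i) (A i)

def meas (A B : Fin n → Finset O) : ℕ := ∑ i, ((A i \ B i).card + (B i \ A i).card)

lemma sum_eq_two_add {M : Type*} [AddCommMonoid M] (f : Fin n → M) {p q : Fin n} (hpq : p ≠ q) :
    ∑ i, f i = f p + f q + ∑ i ∈ (Finset.univ.erase p).erase q, f i := by
  rw [← Finset.add_sum_erase _ f (Finset.mem_univ p),
    ← Finset.add_sum_erase _ f (Finset.mem_erase.2 ⟨hpq.symm, Finset.mem_univ q⟩), add_assoc]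

lemma walk (hv : ∀ i, RankAx (v i)) {B : Fin n → Finset O} (hB : IsAlloc B)
    (hBc : Clean v B) :
    ∀ m : ℕ, ∀ A : Fin n → Finset O, meas A B ≤ m → IsAlloc A → Clean v A →
    ∀ σ : Fin n, (A σ).card < (B σ).card →
    (∃ C, IsAlloc C ∧ Clean v C ∧ (∀ i, i ≠ σ → (C i).card = (A i).card) ∧
      (C σ).card = (A σ).card + 1) ∨
    (∃ C t, IsAlloc C ∧ Clean v C ∧ t ≠ σ ∧ (B t).card < (A t).card ∧
      (∀ i, i ≠ σ → i ≠ t → (C i).card = (A i).card) ∧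
      (C σ).card = (A σ).card + 1 ∧ (C t).card + 1 = (A t).card) := by
  intro m
  induction m using Nat.strong_induction_on with
  | _ m ih =>
  intro A hm hA hAc σ hσ
  have hrk := hv σ
  obtain ⟨y, hyB, hyA, hyI⟩ := hrk.augment (T := B σ) (hAc σ) (by
    have h1 := hAc σ
    have h2 := hBc σ
    unfold Indep at h1 h2
    rw [h2]
    exact_mod_cast hσ)
  by_cases hfree : ∀ j, y ∉ A j
  · -- y is unallocated: direct win
    refine Or.inl ⟨Function.update A σ (insert y (A σ)), ?_, ?_, ?_, ?_⟩
    · intro p q hpq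
      rw [Finset.disjoint_left]
      intro a hap haq
      by_cases hp : p = σ
      · have hq : q ≠ σ := fun h => hpq (hp.trans h.symm)
        rw [hp, Function.update_self] at hap
        rw [Function.update_of_ne hq] at haq
        rcases Finset.mem_insert.1 hap with rfl | hap'
        · exact hfree q haq
        · exact Finset.disjoint_left.1 (hA σ q fun h => hq h.symm) hap' haq
      · rw [Function.update_of_ne hp] at hap
        by_cases hq : q = σ
        · rw [hq, Function.update_self] at haq
          rcases Finset.mem_insert.1 haq with rfl | haq'
          · exact hfree p hap
          · exact Finset.disjoint_left.1 (hA p σ hp) hap haq'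
        · rw [Function.update_of_ne hq] at haq
          exact Finset.disjoint_left.1 (hA p q hpq) hap haq
    · intro i
      by_cases hi : i = σ
      · rw [hi, Function.update_self]; exact hyI
      · rw [Function.update_of_ne hi]; exact hAc i
    · intro i hiσ; rw [Function.update_of_ne hiσ]
    · rw [Function.update_self, Finset.card_insert_of_notMem hyA]
  · push_neg at hfree
    obtain ⟨j, hyj⟩ := hfree
    have hjσ : j ≠ σ := fun h => hyA (h ▸ hyj)
    have hyonly : ∀ k, k ≠ j → y ∉ A k := by
      intro k hkj hyk
      exact Finset.disjoint_left.1 (hA k j hkj) hyk hyj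
    have hyBj : y ∉ B j := fun h => Finset.disjoint_left.1 (hB σ j hjσ.symm) hyB h
    set A' := Function.update (Function.update A j ((A j).erase y)) σ (insert y (A σ))
      with hA'def
    have hA'σ : A' σ = insert y (A σ) := by rw [hA'def, Function.update_self]
    have hA'j : A' j = (A j).erase y := by
      rw [hA'def, Function.update_of_ne hjσ, Function.update_self]
    have hA'k : ∀ k, k ≠ σ → k ≠ j → A' k = A k := by
      intro k h1 h2
      rw [hA'def, Function.update_of_ne h1, Function.update_of_ne h2]
    -- memberships of A'
    have hsubA' : ∀ k, k ≠ σ → A' k ⊆ A k := by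
      intro k hk
      by_cases hkj : k = j
      · rw [hkj, hA'j]; exact Finset.erase_subset _ _
      · rw [hA'k k hk hkj]
    have hallocA' : IsAlloc A' := by
      intro p q hpq
      rw [Finset.disjoint_left]
      intro a hap haq
      by_cases hp : p = σ
      · have hq : q ≠ σ := fun h => hpq (hp.trans h.symm)
        rw [hp, hA'σ] at hap
        have haq' : a ∈ A q := hsubA' q hq haq
        rcases Finset.mem_insert.1 hap with heq | hap'
        · subst heq
          have : q = j := by
            by_contra hqj
            exact hyonly q hqj haq'
          rw [this, hA'j] at haq
          exact (Finset.notMem_erase a _) haq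
        · exact Finset.disjoint_left.1 (hA σ q fun h => hq h.symm) hap' haq'
      · by_cases hq : q = σ
        · rw [hq, hA'σ] at haq
          have hap' : a ∈ A p := hsubA' p hp hap
          rcases Finset.mem_insert.1 haq with heq | haq'
          · subst heq
            have : p = j := by
              by_contra hpj
              exact hyonly p hpj hap'
            rw [this, hA'j] at hap
            exact (Finset.notMem_erase a _) hap
          · exact Finset.disjoint_left.1 (hA p σ hp) hap' haq'
        · exact Finset.disjoint_left.1 (hA p q hpq) (hsubA' p hp hap) (hsubA' q hq haq)
    have hcleanA' : Clean v A' := by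
      intro i
      by_cases hi : i = σ
      · rw [hi, hA'σ]; exact hyI
      · by_cases hij : i = j
        · rw [hij, hA'j]
          exact (hv j).indep_subset (hAc j) (Finset.erase_subset _ _)
        · rw [hA'k i hi hij]; exact hAc i
    have hcardσ : (A' σ).card = (A σ).card + 1 := by
      rw [hA'σ, Finset.card_insert_of_notMem hyA]
    have hcardj : (A' j).card + 1 = (A j).card := by
      rw [hA'j, Finset.card_erase_of_mem hyj]
      have : 0 < (A j).card := Finset.card_pos.2 ⟨y, hyj⟩
      omega
    by_cases hrich : (B j).card < (A j).card
    · -- stop: t = j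
      refine Or.inr ⟨A', j, hallocA', hcleanA', hjσ, hrich, ?_, hcardσ, hcardj⟩
      intro i h1 h2
      rw [hA'k i h1 h2]
    · -- recurse at j
      push_neg at hrich
      -- measure decreases
      have hmeas : meas A' B + 2 ≤ meas A B := by
        have hterm : ∀ i, i ≠ σ → i ≠ j →
            ((A' i \ B i).card + (B i \ A' i).card)
              = ((A i \ B i).card + (B i \ A i).card) := by
          intro i h1 h2; rw [hA'k i h1 h2]
        have hσ1 : A' σ \ B σ = A σ \ B σ := by
          rw [hA'σ, Finset.insert_sdiff_of_mem _ hyB]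
        have hσ2 : B σ \ A' σ = (B σ \ A σ).erase y := by
          rw [hA'σ, Finset.sdiff_insert]
        have hyBAσ : y ∈ B σ \ A σ := Finset.mem_sdiff.2 ⟨hyB, hyA⟩
        have hj1 : A' j \ B j = (A j \ B j).erase y := by
          rw [hA'j, Finset.erase_sdiff_comm]
        have hyABj : y ∈ A j \ B j := Finset.mem_sdiff.2 ⟨hyj, hyBj⟩
        have hj2 : B j \ A' j = B j \ A j := by
          rw [hA'j]
          ext a
          simp only [Finset.mem_sdiff, Finset.mem_erase]
          constructor
          · rintro ⟨haB, haE⟩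
            refine ⟨haB, fun haA => haE ⟨fun hay => hyBj (hay ▸ haB), haA⟩⟩
          · rintro ⟨haB, haA⟩
            exact ⟨haB, fun h => haA h.2⟩
        have e1 : meas A' B = ((A' σ \ B σ).card + (B σ \ A' σ).card)
            + ((A' j \ B j).card + (B j \ A' j).card)
            + ∑ i ∈ (Finset.univ.erase σ).erase j, ((A' i \ B i).card + (B i \ A' i).card) :=
          sum_eq_two_add (fun i => ((A' i \ B i).card + (B i \ A' i).card)) hjσ.symm
        have e2 : meas A B = ((A σ \ B σ).card + (B σ \ A σ).card)
            + ((A j \ B j).card + (B j \ A j).card)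
            + ∑ i ∈ (Finset.univ.erase σ).erase j, ((A i \ B i).card + (B i \ A i).card) :=
          sum_eq_two_add (fun i => ((A i \ B i).card + (B i \ A i).card)) hjσ.symm
        have c1 : (A' σ \ B σ).card = (A σ \ B σ).card := by rw [hσ1]
        have c2 : (B σ \ A' σ).card + 1 = (B σ \ A σ).card := by
          rw [hσ2, Finset.card_erase_of_mem hyBAσ]
          have : 0 < (B σ \ A σ).card := Finset.card_pos.2 ⟨y, hyBAσ⟩
          omega
        have c3 : (A' j \ B j).card + 1 = (A j \ B j).card := by
          rw [hj1, Finset.card_erase_of_mem hyABj]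
          have : 0 < (A j \ B j).card := Finset.card_pos.2 ⟨y, hyABj⟩
          omega
        have c4 : (B j \ A' j).card = (B j \ A j).card := by rw [hj2]
        have h3 : ∑ i ∈ (Finset.univ.erase σ).erase j,
            ((A' i \ B i).card + (B i \ A' i).card)
            = ∑ i ∈ (Finset.univ.erase σ).erase j,
            ((A i \ B i).card + (B i \ A i).card) := by
          apply Finset.sum_congr rfl
          intro i hi
          simp only [Finset.mem_erase] at hi
          exact hterm i hi.2.1 hi.1
        omega
      have hm' : meas A' B < m := by omega
      have hσ' : (A' j).card < (B j).card := by omega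
      rcases ih (meas A' B) hm' A' le_rfl hallocA' hcleanA' j hσ' with
        ⟨C, hC1, hC2, hC3, hC4⟩ | ⟨C, t, hC1, hC2, htj, hrich', hC3, hC4, hC5⟩
      · -- C is a pure augmentation of A' at j: relative to A it is a pure augmentation at σ
        refine Or.inl ⟨C, hC1, hC2, ?_, ?_⟩
        · intro i hiσ
          by_cases hij : i = j
          · rw [hij]; omega
          · rw [hC3 i hij, hA'k i hiσ hij]
        · rw [hC3 σ hjσ.symm, hcardσ]
      · -- C transfers from t
        have htσ : t ≠ σ := by
          intro h
          rw [h] at hrich'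
          rw [hcardσ] at hrich'
          omega
        refine Or.inr ⟨C, t, hC1, hC2, htσ, ?_, ?_, ?_, ?_⟩
        · have : A' t = A t := hA'k t htσ (fun h => htj h)
          rwa [this] at hrich'
        · intro i h1 h2
          by_cases hij : i = j
          · rw [hij] at h1 h2 ⊢
            omega
          · rw [hC3 i hij h2, hA'k i h1 hij]
        · rw [hC3 σ hjσ.symm (Ne.symm htσ), hcardσ]
        · rw [hC5, hA'k t htσ (fun h => htj h)]

lemma exchange (hv : ∀ i, RankAx (v i)) {A B : Fin n → Finset O} (hA : IsAlloc A)
    (hB : IsAlloc B) {s : Fin n} (hs : v s (A s) < v s (B s)) :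
    (∃ C, IsAlloc C ∧ (∀ i, i ≠ s → v i (C i) = v i (A i)) ∧ v s (C s) = v s (A s) + 1) ∨
    (∃ C t, IsAlloc C ∧ t ≠ s ∧ v t (B t) < v t (A t) ∧
      (∀ i, i ≠ s → i ≠ t → v i (C i) = v i (A i)) ∧
      v s (C s) = v s (A s) + 1 ∧ v t (C t) = v t (A t) - 1) := by
  choose A' hA'sub hA'ind hA'card using fun i => (hv i).exists_clean (A i)
  choose B' hB'sub hB'ind hB'card using fun i => (hv i).exists_clean (B i)
  have hA'alloc : IsAlloc A' := fun i j hij => (hA i j hij).mono (hA'sub i) (hA'sub j)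
  have hB'alloc : IsAlloc B' := fun i j hij => (hB i j hij).mono (hB'sub i) (hB'sub j)
  have hs' : (A' s).card < (B' s).card := by
    have h1 := hA'card s
    have h2 := hB'card s
    omega
  rcases walk hv hB'alloc hB'ind (meas A' B') A' le_rfl hA'alloc hA'ind s hs' with
    ⟨C, hC1, hC2, hC3, hC4⟩ | ⟨C, t, hC1, hC2, hts, hrich, hC3, hC4, hC5⟩
  · refine Or.inl ⟨C, hC1, ?_, ?_⟩
    · intro i hi
      have := hC2 i
      unfold Indep at this
      rw [this, hC3 i hi, hA'card i]
    · have := hC2 s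
      unfold Indep at this
      rw [this, hC4]
      have := hA'card s
      push_cast
      omega
  · refine Or.inr ⟨C, t, hC1, hts, ?_, ?_, ?_, ?_⟩
    · have h1 := hA'card t
      have h2 := hB'card t
      omega
    · intro i h1 h2
      have := hC2 i
      unfold Indep at this
      rw [this, hC3 i h1 h2, hA'card i]
    · have := hC2 s
      unfold Indep at this
      rw [this, hC4]
      have := hA'card s
      push_cast
      omega
    · have := hC2 t
      unfold Indep at this
      rw [this]
      have h1 := hA'card t
      have h2 := hC5
      push_cast
      omega

end Alloc


section Psi

variable {n : ℕ}

def psi (n c : ℕ) (u : Fin n → ℤ) : ℤ := ∑ i, ((n : ℤ) + 1) ^ ((c : ℤ) - u i).toNat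

lemma psi_perm (c : ℕ) (u : Fin n → ℤ) (σ : Equiv.Perm (Fin n)) :
    psi n c (u ∘ σ) = psi n c u :=
  Equiv.sum_comp σ (fun i => ((n : ℤ) + 1) ^ ((c : ℤ) - u i).toNat)

lemma psi_term_pos (e : ℕ) : (0 : ℤ) < ((n : ℤ) + 1) ^ e :=
  pow_pos (by positivity) e

lemma psi_lt_of_lex_lt {c : ℕ} {a b : Fin n → ℤ} (ha : Monotone a) (hb : Monotone b)
    (hbda : ∀ i, 0 ≤ a i ∧ a i ≤ c) (hbdb : ∀ i, 0 ≤ b i ∧ b i ≤ c)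
    (h : toLex a < toLex b) : psi n c b < psi n c a := by
  obtain ⟨k, hk0, hklt0⟩ := h
  have hk : ∀ j, j < k → a j = b j := hk0
  have hklt : a k < b k := hklt0
  clear hk0 hklt0
  set M : ℤ := (n : ℤ) + 1 with hM
  have hM1 : (1 : ℤ) ≤ M := by rw [hM]; omega
  unfold psi
  rw [← Finset.sum_filter_add_sum_filter_not Finset.univ (fun i => i < k)
      (fun i => M ^ ((c : ℤ) - b i).toNat),
    ← Finset.sum_filter_add_sum_filter_not Finset.univ (fun i => i < k)
      (fun i => M ^ ((c : ℤ) - a i).toNat)]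
  have heq : ∑ i ∈ Finset.univ.filter (fun i => i < k), M ^ ((c : ℤ) - b i).toNat
      = ∑ i ∈ Finset.univ.filter (fun i => i < k), M ^ ((c : ℤ) - a i).toNat := by
    apply Finset.sum_congr rfl
    intro i hi
    rw [hk i (Finset.mem_filter.1 hi).2]
  rw [heq]
  have hkT : k ∈ Finset.univ.filter (fun i => ¬ i < k) := by simp
  set e : ℕ := ((c : ℤ) - a k - 1).toNat with he
  have hak : a k < b k := hklt
  have hbkc : b k ≤ c := (hbdb k).2
  have hcak : ((c : ℤ) - a k).toNat = e + 1 := by omega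
  have key : ∑ i ∈ Finset.univ.filter (fun i => ¬ i < k), M ^ ((c : ℤ) - b i).toNat
      < ∑ i ∈ Finset.univ.filter (fun i => ¬ i < k), M ^ ((c : ℤ) - a i).toNat := by
    calc ∑ i ∈ Finset.univ.filter (fun i => ¬ i < k), M ^ ((c : ℤ) - b i).toNat
        ≤ ∑ _i ∈ Finset.univ.filter (fun i => ¬ i < k), M ^ e := by
          apply Finset.sum_le_sum
          intro i hi
          have hik : k ≤ i := le_of_not_gt (Finset.mem_filter.1 hi).2
          have : a k + 1 ≤ b i := by
            have := hb hik
            omega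
          apply pow_le_pow_right₀ hM1
          omega
      _ = (Finset.univ.filter (fun i : Fin n => ¬ i < k)).card * M ^ e := by
          rw [Finset.sum_const, nsmul_eq_mul]
      _ ≤ n * M ^ e := by
          apply mul_le_mul_of_nonneg_right _ (le_of_lt (psi_term_pos (n := n) e))
          have h1 : (Finset.univ.filter (fun i : Fin n => ¬ i < k)).card ≤ n := by
            have := Finset.card_filter_le Finset.univ (fun i : Fin n => ¬ i < k)
            simpa using this
          exact_mod_cast h1
      _ < M ^ (e + 1) := by
          rw [pow_succ]
          have := psi_term_pos (n := n) e
          nlinarith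
      _ = M ^ ((c : ℤ) - a k).toNat := by rw [hcak]
      _ ≤ ∑ i ∈ Finset.univ.filter (fun i => ¬ i < k), M ^ ((c : ℤ) - a i).toNat := by
          apply Finset.single_le_sum _ hkT
          intro i _
          exact le_of_lt (psi_term_pos (n := n) _)
  omega

end Psi

section Glue

variable {O : Type*} [DecidableEq O] [Fintype O] {n : ℕ} {v : Fin n → Finset O → ℤ}

def Psi (v : Fin n → Finset O → ℤ) (A : Fin n → Finset O) : ℤ :=
  psi n (Fintype.card O) (fun i => v i (A i))

lemma psi_sVec (A : Fin n → Finset O) :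
    psi n (Fintype.card O) (sVec v A) = Psi v A :=
  psi_perm (Fintype.card O) (fun i => v i (A i)) (Tuple.sort (fun i => v i (A i)))

lemma sVec_monotone (A : Fin n → Finset O) : Monotone (sVec v A) :=
  Tuple.monotone_sort (fun i => v i (A i))

lemma lex_lt_psi (hbd : ∀ i S, 0 ≤ v i S ∧ v i S ≤ Fintype.card O) {A B : Fin n → Finset O}
    (h : toLex (sVec v A) < toLex (sVec v B)) : Psi v B < Psi v A := by
  rw [← psi_sVec (v := v) A, ← psi_sVec (v := v) B]
  exact psi_lt_of_lex_lt (sVec_monotone A) (sVec_monotone B)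
    (fun i => hbd _ _) (fun i => hbd _ _) h

lemma lex_le_iff_psi (hbd : ∀ i S, 0 ≤ v i S ∧ v i S ≤ Fintype.card O)
    (A B : Fin n → Finset O) :
    toLex (sVec v A) ≤ toLex (sVec v B) ↔ Psi v B ≤ Psi v A := by
  constructor
  · intro h
    rcases eq_or_lt_of_le h with heq | hlt
    · have hv : sVec v A = sVec v B := toLex_inj.1 heq
      rw [← psi_sVec (v := v) A, ← psi_sVec (v := v) B, hv]
    · exact (lex_lt_psi hbd hlt).le
  · intro h
    by_contra hno
    have htri := (Pi.isTrichotomous_lex (fun i j : Fin n => i < j)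
      (fun {_} (x y : ℤ) => x < y) (IsWellFounded.wf)).trichotomous
    rcases (or_iff_not_imp_left.2 fun h1 => or_iff_not_imp_right.2 fun h2 =>
        htri (sVec v A) (sVec v B) h1 h2 :
      Pi.Lex (fun i j : Fin n => i < j) (fun {_} (x y : ℤ) => x < y) (sVec v A) (sVec v B) ∨
        sVec v A = sVec v B ∨
        Pi.Lex (fun i j : Fin n => i < j) (fun {_} (x y : ℤ) => x < y) (sVec v B) (sVec v A))
      with hlt | heq | hgt
    · have hlt' : toLex (sVec v A) < toLex (sVec v B) := hlt
      exact hno hlt'.le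
    · exact hno (le_of_eq (congrArg toLex heq))
    · have hlt : toLex (sVec v B) < toLex (sVec v A) := hgt
      have := lex_lt_psi hbd hlt
      omega

lemma multiset_eq_of_sVec_eq {A B : Fin n → Finset O} (h : sVec v A = sVec v B) :
    Finset.univ.val.map (fun i => v i (A i)) = Finset.univ.val.map (fun i => v i (B i)) := by
  have key : ∀ C : Fin n → Finset O,
      Finset.univ.val.map (fun i => v i (C i)) = Finset.univ.val.map (sVec v C) := by
    intro C
    have h1 : Finset.univ.val.map (sVec v C)
        = (Finset.univ.val.map (Tuple.sort (fun i => v i (C i)))).map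
            (fun i => v i (C i)) := by
      rw [Multiset.map_map]
      rfl
    have h2 : Finset.univ.val.map ⇑(Tuple.sort (fun i => v i (C i))) = Finset.univ.val := by
      have := Finset.map_univ_equiv (Tuple.sort (fun i => v i (C i)))
      calc Finset.univ.val.map ⇑(Tuple.sort (fun i => v i (C i)))
          = (Finset.univ.map (Tuple.sort (fun i => v i (C i))).toEmbedding).val := by
            rw [Finset.map_val]; rfl
        _ = Finset.univ.val := by rw [this]
    rw [h1, h2]
  rw [key A, key B, h]

end Glue


variable {O : Type*} [DecidableEq O] [Fintype O] {n : ℕ} {v : Fin n → Finset O → ℤ}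

lemma card_prod_transfer {A B : Fin n → Finset O}
    (h : Finset.univ.val.map (fun i => v i (A i)) = Finset.univ.val.map (fun i => v i (B i))) :
    (posAgents v A).card = (posAgents v B).card ∧
      ∏ i ∈ posAgents v A, v i (A i) = ∏ i ∈ posAgents v B, v i (B i) := by
  constructor
  · have key : ∀ C : Fin n → Finset O, (posAgents v C).card
        = Multiset.countP (fun x : ℤ => 0 < x) (Finset.univ.val.map (fun i => v i (C i))) := by
      intro C
      rw [Multiset.countP_map]
      unfold posAgents
      rw [Finset.card_def, Finset.filter_val]
    rw [key A, key B, h]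
  · have key : ∀ C : Fin n → Finset O, ∏ i ∈ posAgents v C, v i (C i)
        = ((Finset.univ.val.map (fun i => v i (C i))).filter (fun x : ℤ => 0 < x)).prod := by
      intro C
      rw [Multiset.filter_map]
      unfold posAgents
      rw [Finset.prod_eq_multiset_prod, Finset.filter_val]
      rfl
    rw [key A, key B, h]

section Steps

variable {n : ℕ} {v : Fin n → Finset O → ℤ}

lemma psi_step_lt (hbd : ∀ i S, 0 ≤ v i S ∧ v i S ≤ Fintype.card O)
    {A C : Fin n → Finset O} {s : Fin n}
    (hoff : ∀ i, i ≠ s → v i (C i) = v i (A i)) (hs : v s (C s) = v s (A s) + 1) :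
    Psi v C < Psi v A := by
  have hn : 0 < n := s.pos
  have hM : (1 : ℤ) < (n : ℤ) + 1 := by exact_mod_cast Nat.succ_lt_succ hn
  unfold Psi psi
  rw [← Finset.add_sum_erase _ _ (Finset.mem_univ s),
    ← Finset.add_sum_erase _ _ (Finset.mem_univ s)]
  have htail : ∑ i ∈ Finset.univ.erase s,
      ((n : ℤ) + 1) ^ ((Fintype.card O : ℤ) - v i (C i)).toNat
      = ∑ i ∈ Finset.univ.erase s,
      ((n : ℤ) + 1) ^ ((Fintype.card O : ℤ) - v i (A i)).toNat := by
    apply Finset.sum_congr rfl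
    intro i hi
    rw [hoff i (Finset.mem_erase.1 hi).1]
  rw [htail]
  have hbound := (hbd s (C s)).2
  have hexp : ((Fintype.card O : ℤ) - v s (C s)).toNat
      < ((Fintype.card O : ℤ) - v s (A s)).toNat := by omega
  exact add_lt_add_of_lt_of_le (pow_lt_pow_right₀ hM hexp) le_rfl

lemma psi_two_point (hbd : ∀ i S, 0 ≤ v i S ∧ v i S ≤ Fintype.card O)
    {A C : Fin n → Finset O} {s t : Fin n} (hts : t ≠ s)
    (hoff : ∀ i, i ≠ s → i ≠ t → v i (C i) = v i (A i))
    (hcs : v s (C s) = v s (A s) + 1) (hct : v t (C t) = v t (A t) - 1) :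
    Psi v C + ((n : ℤ) + 1) ^ ((Fintype.card O : ℤ) - v s (A s)).toNat
      + ((n : ℤ) + 1) ^ ((Fintype.card O : ℤ) - v t (A t)).toNat
    = Psi v A + ((n : ℤ) + 1) ^ ((Fintype.card O : ℤ) - v s (C s)).toNat
      + ((n : ℤ) + 1) ^ ((Fintype.card O : ℤ) - v t (C t)).toNat := by
  have e1 : Psi v C = ((n : ℤ) + 1) ^ ((Fintype.card O : ℤ) - v s (C s)).toNat
      + ((n : ℤ) + 1) ^ ((Fintype.card O : ℤ) - v t (C t)).toNat
      + ∑ i ∈ (Finset.univ.erase s).erase t,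
        ((n : ℤ) + 1) ^ ((Fintype.card O : ℤ) - v i (C i)).toNat :=
    sum_eq_two_add _ (Ne.symm hts)
  have e2 : Psi v A = ((n : ℤ) + 1) ^ ((Fintype.card O : ℤ) - v s (A s)).toNat
      + ((n : ℤ) + 1) ^ ((Fintype.card O : ℤ) - v t (A t)).toNat
      + ∑ i ∈ (Finset.univ.erase s).erase t,
        ((n : ℤ) + 1) ^ ((Fintype.card O : ℤ) - v i (A i)).toNat :=
    sum_eq_two_add _ (Ne.symm hts)
  have htail : ∑ i ∈ (Finset.univ.erase s).erase t,
      ((n : ℤ) + 1) ^ ((Fintype.card O : ℤ) - v i (C i)).toNat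
      = ∑ i ∈ (Finset.univ.erase s).erase t,
      ((n : ℤ) + 1) ^ ((Fintype.card O : ℤ) - v i (A i)).toNat := by
    apply Finset.sum_congr rfl
    intro i hi
    simp only [Finset.mem_erase] at hi
    rw [hoff i hi.2.1 hi.1]
  rw [e1, e2, htail]
  ring

lemma psi_gap_lt (hbd : ∀ i S, 0 ≤ v i S ∧ v i S ≤ Fintype.card O)
    {A C : Fin n → Finset O} {s t : Fin n} (hts : t ≠ s)
    (hgap : v s (A s) + 2 ≤ v t (A t))
    (hoff : ∀ i, i ≠ s → i ≠ t → v i (C i) = v i (A i))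
    (hcs : v s (C s) = v s (A s) + 1) (hct : v t (C t) = v t (A t) - 1) :
    Psi v C < Psi v A := by
  have hn : 0 < n := s.pos
  have hM : (1 : ℤ) < (n : ℤ) + 1 := by exact_mod_cast Nat.succ_lt_succ hn
  set M : ℤ := (n : ℤ) + 1 with hMdef
  have key := psi_two_point hbd hts hoff hcs hct
  set c : ℤ := (Fintype.card O : ℤ) with hc
  have hbt := (hbd t (A t)).2
  have hbs := (hbd s (A s)).1
  set p : ℕ := (c - v t (A t)).toNat with hp
  set q : ℕ := (c - v s (A s)).toNat with hq
  have hq2 : 2 ≤ q := by omega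
  have hpq : p + 2 ≤ q := by omega
  have hcs' : (c - v s (C s)).toNat = q - 1 := by omega
  have hct' : (c - v t (C t)).toNat = p + 1 := by omega
  rw [hcs', hct'] at key
  -- key : Psi C + M^q + M^p = Psi A + M^(q-1) + M^(p+1)
  have e1 : M ^ q = M ^ (q - 1) * M := by
    rw [← pow_succ]
    congr 1
    omega
  have e2 : M ^ (p + 1) = M ^ p * M := pow_succ M p
  have e3 : M ^ (p + 1) ≤ M ^ (q - 1) := pow_le_pow_right₀ (le_of_lt hM) (by omega)
  have e5 : M ^ p < M ^ (q - 1) := pow_lt_pow_right₀ hM (by omega)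
  have e6 : (0 : ℤ) < (M - 1) * (M ^ (q - 1) - M ^ p) := mul_pos (by omega) (by omega)
  nlinarith [e1, e2, e6]

lemma psi_swap_eq (hbd : ∀ i S, 0 ≤ v i S ∧ v i S ≤ Fintype.card O)
    {A C : Fin n → Finset O} {s t : Fin n} (hts : t ≠ s)
    (heq : v t (A t) = v s (A s) + 1)
    (hoff : ∀ i, i ≠ s → i ≠ t → v i (C i) = v i (A i))
    (hcs : v s (C s) = v s (A s) + 1) (hct : v t (C t) = v t (A t) - 1) :
    Psi v C = Psi v A := by
  have key := psi_two_point hbd hts hoff hcs hct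
  have h1 : v s (C s) = v t (A t) := by omega
  have h2 : v t (C t) = v s (A s) := by omega
  rw [h1, h2] at key
  omega

lemma psi_mono_pointwise {A B : Fin n → Finset O}
    (h : ∀ i, v i (B i) ≤ v i (A i)) : Psi v A ≤ Psi v B := by
  unfold Psi psi
  apply Finset.sum_le_sum
  intro i _
  dsimp only
  apply pow_le_pow_right₀ (by omega)
  have := h i
  omega

theorem psi_min_of_local (hv : ∀ i, RankAx (v i))
    (hbd : ∀ i S, 0 ≤ v i S ∧ v i S ≤ Fintype.card O)
    {A : Fin n → Finset O} (hA : IsAlloc A)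
    (hL1 : ∀ C s, IsAlloc C → (∀ i, i ≠ s → v i (C i) = v i (A i)) →
      v s (C s) = v s (A s) + 1 → False)
    (hL2 : ∀ C s t, IsAlloc C → t ≠ s → v s (A s) + 2 ≤ v t (A t) →
      (∀ i, i ≠ s → i ≠ t → v i (C i) = v i (A i)) → v s (C s) = v s (A s) + 1 →
      v t (C t) = v t (A t) - 1 → False) :
    ∀ B, IsAlloc B → Psi v A ≤ Psi v B := by
  classical
  set 𝒜 : Finset (Fin n → Finset O) := Finset.univ.filter (fun B => IsAlloc B) with h𝒜def
  have hmemA : A ∈ 𝒜 := Finset.mem_filter.2 ⟨Finset.mem_univ _, hA⟩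
  obtain ⟨W₀, hW₀mem, hW₀min⟩ := 𝒜.exists_min_image (Psi v) ⟨A, hmemA⟩
  suffices hkey : Psi v A ≤ Psi v W₀ by
    intro B hB
    exact le_trans hkey (hW₀min B (Finset.mem_filter.2 ⟨Finset.mem_univ _, hB⟩))
  by_contra hPA
  push_neg at hPA
  set dl : (Fin n → Finset O) → ℕ := fun B => ∑ i, (v i (A i) - v i (B i)).natAbs with hdl
  set 𝒲 : Finset (Fin n → Finset O) := 𝒜.filter (fun B => Psi v B = Psi v W₀) with h𝒲def
  obtain ⟨W, hWmem, hWmin⟩ := 𝒲.exists_min_image dl ⟨W₀, Finset.mem_filter.2 ⟨hW₀mem, rfl⟩⟩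
  have hWalloc : IsAlloc W := (Finset.mem_filter.1 (Finset.mem_filter.1 hWmem).1).2
  have hWpsi : Psi v W = Psi v W₀ := (Finset.mem_filter.1 hWmem).2
  have hmin : ∀ B, IsAlloc B → Psi v W ≤ Psi v B := by
    intro B hB
    rw [hWpsi]
    exact hW₀min B (Finset.mem_filter.2 ⟨Finset.mem_univ _, hB⟩)
  have hWA : Psi v W < Psi v A := by rw [hWpsi]; exact hPA
  have chain : ∀ N : ℕ, ∀ s : Fin n, v s (A s) < v s (W s) → (v s (W s)).toNat ≤ N → False := by
    intro N
    induction N using Nat.strong_induction_on with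
    | _ N ih =>
    intro s hs hsN
    rcases exchange hv hA hWalloc hs with
      ⟨C, hC1, hC2, hC3⟩ | ⟨C, t, hC1, hts, htval, hC2, hC3, hC4⟩
    · exact hL1 C s hC1 hC2 hC3
    · by_cases hgap : v s (A s) + 2 ≤ v t (A t)
      · exact hL2 C s t hC1 hts hgap hC2 hC3 hC4
      · push_neg at hgap
        rcases exchange hv hWalloc hA htval with
          ⟨C', hC'1, hC'2, hC'3⟩ | ⟨C', s', hC'1, hs't, hs'val, hC'2, hC'3, hC'4⟩
        · have h1 := psi_step_lt (A := W) (C := C') hbd hC'2 hC'3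
          have h2 := hmin C' hC'1
          omega
        · by_cases hg2 : v t (W t) + 2 ≤ v s' (W s')
          · have h1 := psi_gap_lt (A := W) (C := C') hbd hs't hg2 hC'2 hC'3 hC'4
            have h2 := hmin C' hC'1
            omega
          · push_neg at hg2
            by_cases heq2 : v s' (W s') = v t (W t) + 1
            · have hpsieq : Psi v C' = Psi v W :=
                psi_swap_eq hbd hs't heq2 hC'2 hC'3 hC'4
              have hC'mem : C' ∈ 𝒲 := Finset.mem_filter.2
                ⟨Finset.mem_filter.2 ⟨Finset.mem_univ _, hC'1⟩, hpsieq.trans hWpsi⟩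
              have hdlt : dl C' < dl W := by
                have e1 : dl C' = (v t (A t) - v t (C' t)).natAbs
                    + (v s' (A s') - v s' (C' s')).natAbs
                    + ∑ i ∈ (Finset.univ.erase t).erase s',
                        (v i (A i) - v i (C' i)).natAbs :=
                  sum_eq_two_add _ (Ne.symm hs't)
                have e2 : dl W = (v t (A t) - v t (W t)).natAbs
                    + (v s' (A s') - v s' (W s')).natAbs
                    + ∑ i ∈ (Finset.univ.erase t).erase s',
                        (v i (A i) - v i (W i)).natAbs :=
                  sum_eq_two_add _ (Ne.symm hs't)
                have etail : ∑ i ∈ (Finset.univ.erase t).erase s',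
                    (v i (A i) - v i (C' i)).natAbs
                    = ∑ i ∈ (Finset.univ.erase t).erase s',
                    (v i (A i) - v i (W i)).natAbs := by
                  apply Finset.sum_congr rfl
                  intro i hi
                  simp only [Finset.mem_erase] at hi
                  rw [hC'2 i hi.2.1 hi.1]
                rw [e1, e2, etail]
                omega
              exact absurd (hWmin C' hC'mem) (not_le.2 hdlt)
            · have hbs := (hbd s (A s)).1
              exact ih ((v s' (W s')).toNat) (by omega) s' hs'val le_rfl
  have hex : ∃ s, v s (A s) < v s (W s) := by
    by_contra hno
    push_neg at hno
    have := psi_mono_pointwise (A := A) (B := W) hno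
    omega
  obtain ⟨s, hs⟩ := hex
  exact chain ((v s (W s)).toNat) s hs le_rfl

lemma mnw_L1 (hbd : ∀ i S, 0 ≤ v i S ∧ v i S ≤ Fintype.card O)
    {A : Fin n → Finset O} (hM : IsMNW v A) :
    ∀ C s, IsAlloc C → (∀ i, i ≠ s → v i (C i) = v i (A i)) →
      v s (C s) = v s (A s) + 1 → False := by
  intro C s hC hoff hcs
  by_cases hus : 0 < v s (A s)
  · -- same positive agents, product strictly bigger
    have hPset : posAgents v C = posAgents v A := by
      unfold posAgents
      apply Finset.filter_congr
      intro i _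
      by_cases hi : i = s
      · subst hi
        constructor <;> intro <;> omega
      · rw [hoff i hi]
    have hprod : ∏ i ∈ posAgents v A, v i (A i) < ∏ i ∈ posAgents v C, v i (C i) := by
      rw [hPset]
      apply Finset.prod_lt_prod
      · intro i hi
        exact (Finset.mem_filter.1 hi).2
      · intro i hi
        by_cases his : i = s
        · subst his; omega
        · rw [hoff i his]
      · refine ⟨s, Finset.mem_filter.2 ⟨Finset.mem_univ _, hus⟩, by omega⟩
    have := hM.2.2 C hC (by rw [hPset])
    omega
  · -- v s (A s) = 0 : number of positive agents increases
    have hus0 : v s (A s) = 0 := le_antisymm (not_lt.1 hus) (hbd s (A s)).1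
    have hPset : posAgents v C = insert s (posAgents v A) := by
      unfold posAgents
      ext i
      simp only [Finset.mem_filter, Finset.mem_univ, true_and, Finset.mem_insert]
      by_cases hi : i = s
      · subst hi
        constructor
        · intro _; exact Or.inl rfl
        · intro _; omega
      · rw [hoff i hi]
        exact ⟨fun h => Or.inr h, fun h => h.resolve_left hi⟩
    have hcard : (posAgents v A).card < (posAgents v C).card := by
      rw [hPset, Finset.card_insert_of_notMem (by
        simp only [posAgents, Finset.mem_filter]
        omega)]
      omega
    exact absurd (hM.2.1 C hC) (not_le.2 hcard)

lemma mnw_L2 (hbd : ∀ i S, 0 ≤ v i S ∧ v i S ≤ Fintype.card O)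
    {A : Fin n → Finset O} (hM : IsMNW v A) :
    ∀ C s t, IsAlloc C → t ≠ s → v s (A s) + 2 ≤ v t (A t) →
      (∀ i, i ≠ s → i ≠ t → v i (C i) = v i (A i)) → v s (C s) = v s (A s) + 1 →
      v t (C t) = v t (A t) - 1 → False := by
  intro C s t hC hts hgap hoff hcs hct
  have hbs := (hbd s (A s)).1
  by_cases hus : 0 < v s (A s)
  · have hPset : posAgents v C = posAgents v A := by
      unfold posAgents
      apply Finset.filter_congr
      intro i _
      by_cases hi : i = s
      · subst hi; constructor <;> intro <;> omega
      · by_cases hit : i = t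
        · subst hit; constructor <;> intro <;> omega
        · rw [hoff i hi hit]
    have hsP : s ∈ posAgents v A := Finset.mem_filter.2 ⟨Finset.mem_univ _, hus⟩
    have htP : t ∈ (posAgents v A).erase s :=
      Finset.mem_erase.2 ⟨hts, Finset.mem_filter.2 ⟨Finset.mem_univ _, by omega⟩⟩
    have hrest : (0 : ℤ) < ∏ i ∈ ((posAgents v A).erase s).erase t, v i (A i) := by
      apply Finset.prod_pos
      intro i hi
      have := Finset.mem_of_mem_erase (Finset.mem_of_mem_erase hi)
      exact (Finset.mem_filter.1 this).2
    have hprodA : ∏ i ∈ posAgents v A, v i (A i)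
        = v s (A s) * (v t (A t) * ∏ i ∈ ((posAgents v A).erase s).erase t, v i (A i)) := by
      rw [← Finset.mul_prod_erase _ _ hsP, ← Finset.mul_prod_erase _ _ htP]
    have hprodC : ∏ i ∈ posAgents v A, v i (C i)
        = v s (C s) * (v t (C t) * ∏ i ∈ ((posAgents v A).erase s).erase t, v i (C i)) := by
      rw [← Finset.mul_prod_erase _ _ hsP, ← Finset.mul_prod_erase _ _ htP]
    have hresteq : ∏ i ∈ ((posAgents v A).erase s).erase t, v i (C i)
        = ∏ i ∈ ((posAgents v A).erase s).erase t, v i (A i) := by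
      apply Finset.prod_congr rfl
      intro i hi
      have h1 := Finset.mem_erase.1 hi
      have h2 := Finset.mem_erase.1 h1.2
      exact hoff i h2.1 h1.1
    have hfac : v s (A s) * v t (A t) < v s (C s) * v t (C t) := by nlinarith
    have hprodlt : ∏ i ∈ posAgents v A, v i (A i) < ∏ i ∈ posAgents v A, v i (C i) := by
      rw [hprodA, hprodC, hresteq]
      nlinarith
    have := hM.2.2 C hC (by rw [hPset])
    rw [hPset] at this
    omega
  · have hus0 : v s (A s) = 0 := by omega
    have hPset : posAgents v C = insert s (posAgents v A) := by
      unfold posAgents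
      ext i
      simp only [Finset.mem_filter, Finset.mem_univ, true_and, Finset.mem_insert]
      by_cases hi : i = s
      · subst hi
        constructor <;> intro <;> first | (left; rfl) | omega
      · by_cases hit : i = t
        · subst hit
          constructor <;> intro h
          · exact Or.inr (by omega)
          · omega
        · rw [hoff i hi hit]
          exact ⟨fun h => Or.inr h, fun h => h.resolve_left hi⟩
    have hcard : (posAgents v A).card < (posAgents v C).card := by
      rw [hPset, Finset.card_insert_of_notMem (by
        simp only [posAgents, Finset.mem_filter]
        omega)]
      omega
    exact absurd (hM.2.1 C hC) (not_le.2 hcard)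

lemma exists_mnw (v : Fin n → Finset O → ℤ) : ∃ B : Fin n → Finset O, IsMNW v B := by
  classical
  set 𝒜 : Finset (Fin n → Finset O) := Finset.univ.filter (fun B => IsAlloc B) with h𝒜def
  have hne : (fun _ : Fin n => (∅ : Finset O)) ∈ 𝒜 :=
    Finset.mem_filter.2 ⟨Finset.mem_univ _, fun i j _ => Finset.disjoint_empty_left _⟩
  obtain ⟨B₁, hB₁, hmax₁⟩ := 𝒜.exists_max_image (fun B => (posAgents v B).card) ⟨_, hne⟩
  set ℬ : Finset (Fin n → Finset O) :=
    𝒜.filter (fun B => (posAgents v B).card = (posAgents v B₁).card) with hℬdef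
  obtain ⟨B₂, hB₂, hmax₂⟩ := ℬ.exists_max_image
    (fun B => ∏ i ∈ posAgents v B, v i (B i)) ⟨B₁, Finset.mem_filter.2 ⟨hB₁, rfl⟩⟩
  have hB₂A : IsAlloc B₂ := (Finset.mem_filter.1 (Finset.mem_filter.1 hB₂).1).2
  have hB₂card : (posAgents v B₂).card = (posAgents v B₁).card := (Finset.mem_filter.1 hB₂).2
  refine ⟨B₂, hB₂A, ?_, ?_⟩
  · intro B hB
    rw [hB₂card]
    exact hmax₁ B (Finset.mem_filter.2 ⟨Finset.mem_univ _, hB⟩)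
  · intro B hB hcard
    exact hmax₂ B (Finset.mem_filter.2
      ⟨Finset.mem_filter.2 ⟨Finset.mem_univ _, hB⟩, by omega⟩)

end Steps

end LexMNW

/-- For matroid rank valuations, an allocation is leximin iff
it is a maximum Nash welfare allocation. -/
theorem leximin_iff_MNW
    {O : Type*} [DecidableEq O] [Fintype O] {n : ℕ}
    (v : Fin n → Finset O → ℤ)
    (h0 : ∀ i, v i ∅ = 0)
    (hbin : ∀ i (S : Finset O) (o : O), o ∉ S →
      v i (insert o S) - v i S = 0 ∨ v i (insert o S) - v i S = 1)
    (hsub : ∀ i (S T : Finset O), S ⊆ T → ∀ o ∉ T,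
      v i (insert o T) - v i T ≤ v i (insert o S) - v i S)
    (A : Fin n → Finset O) :
    (IsAlloc A ∧ ∀ B : Fin n → Finset O, IsAlloc B →
        toLex (sVec v B) ≤ toLex (sVec v A)) ↔ IsMNW v A := by
  have hv : ∀ i, LexMNW.RankAx (v i) := fun i => ⟨h0 i, hbin i, hsub i⟩
  have hbd : ∀ i (S : Finset O), 0 ≤ v i S ∧ v i S ≤ (Fintype.card O : ℤ) := by
    intro i S
    refine ⟨(hv i).nonneg S, le_trans ((hv i).le_card S) ?_⟩
    have := Finset.card_le_univ S
    have h2 : (Finset.univ : Finset O).card = Fintype.card O := Finset.card_univ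
    exact_mod_cast h2 ▸ Nat.cast_le.2 this
  constructor
  · rintro ⟨hA, hLex⟩
    have hL1 : ∀ C s, IsAlloc C → (∀ i, i ≠ s → v i (C i) = v i (A i)) →
        v s (C s) = v s (A s) + 1 → False := by
      intro C s hC hoff hcs
      have hlt : LexMNW.Psi v C < LexMNW.Psi v A := LexMNW.psi_step_lt hbd hoff hcs
      have := (LexMNW.lex_le_iff_psi hbd C A).1 (hLex C hC)
      omega
    have hL2 : ∀ C s t, IsAlloc C → t ≠ s → v s (A s) + 2 ≤ v t (A t) →
        (∀ i, i ≠ s → i ≠ t → v i (C i) = v i (A i)) → v s (C s) = v s (A s) + 1 →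
        v t (C t) = v t (A t) - 1 → False := by
      intro C s t hC hts hgap hoff hcs hct
      have hlt : LexMNW.Psi v C < LexMNW.Psi v A :=
        LexMNW.psi_gap_lt hbd hts hgap hoff hcs hct
      have := (LexMNW.lex_le_iff_psi hbd C A).1 (hLex C hC)
      omega
    have hmin := LexMNW.psi_min_of_local hv hbd hA hL1 hL2
    obtain ⟨Bs, hBs⟩ := LexMNW.exists_mnw v
    have hminBs := LexMNW.psi_min_of_local hv hbd hBs.1
      (LexMNW.mnw_L1 hbd hBs) (LexMNW.mnw_L2 hbd hBs)
    have hPsieq : LexMNW.Psi v A = LexMNW.Psi v Bs :=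
      le_antisymm (hmin Bs hBs.1) (hminBs A hA)
    have hle1 : toLex (sVec v A) ≤ toLex (sVec v Bs) :=
      (LexMNW.lex_le_iff_psi hbd A Bs).2 (le_of_eq hPsieq.symm)
    have hle2 : toLex (sVec v Bs) ≤ toLex (sVec v A) := hLex Bs hBs.1
    have hsv : sVec v A = sVec v Bs := toLex_inj.1 (le_antisymm hle1 hle2)
    obtain ⟨hcard, hprod⟩ := LexMNW.card_prod_transfer (LexMNW.multiset_eq_of_sVec_eq hsv)
    refine ⟨hA, ?_, ?_⟩
    · intro B hB
      rw [hcard]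
      exact hBs.2.1 B hB
    · intro B hB hc
      rw [hprod]
      exact hBs.2.2 B hB (by omega)
  · intro hM
    refine ⟨hM.1, ?_⟩
    have hmin := LexMNW.psi_min_of_local hv hbd hM.1
      (LexMNW.mnw_L1 hbd hM) (LexMNW.mnw_L2 hbd hM)
    intro B hB
    exact (LexMNW.lex_le_iff_psi hbd B A).2 (hmin B hB)
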